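/- The free commutative semigroup on two generators does not have rational word problem. -/

import Mathlib

/-- The monoid homomorphism `(A ⊕ A)* → A* × A*` sending `inl a ↦ (a, ε)` and
`inr a ↦ (ε, a)`, used to define rational (asynchronous two-tape) relations. -/
def twoTapeHom (A : Type) : FreeMonoid (A ⊕ A) →* FreeMonoid A × FreeMonoid A :=
  FreeMonoid.lift (Sum.elim (fun a => (FreeMonoid.of a, 1)) (fun a => (1, FreeMonoid.of a)))

/-- A relation `R ⊆ A* × A*` is rational if it is the image of a regular language
over the alphabet `A ⊕ A` under `twoTapeHom`; equivalently, it is recognised by a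
two-tape asynchronous finite automaton. -/
def IsRationalRel {A : Type} (R : Set (FreeMonoid A × FreeMonoid A)) : Prop :=
  ∃ L : Language (A ⊕ A), L.IsRegular ∧
    twoTapeHom A '' {w : FreeMonoid (A ⊕ A) | w.toList ∈ L} = R

/-- The canonical embedding of the free semigroup `A⁺` into the free monoid `A*`. -/
def freeSemigroupToWord {A : Type} : FreeSemigroup A →ₙ* FreeMonoid A :=
  FreeSemigroup.lift FreeMonoid.of

/-- The two-tape word problem `ι(S,A)` of a semigroup `S` with respect to a
(generating) map `f : A → S`: all pairs of nonempty words over `A` whose images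
in `S` coincide, viewed as a relation on words in `A*`. -/
def wordProblem {A S : Type} [Semigroup S] (f : A → S) :
    Set (FreeMonoid A × FreeMonoid A) :=
  {p | ∃ w₁ w₂ : FreeSemigroup A,
        FreeSemigroup.lift f w₁ = FreeSemigroup.lift f w₂ ∧
        p = (freeSemigroupToWord w₁, freeSemigroupToWord w₂)}

/-- A semigroup has rational word problem if it is generated by some finite set `A`
(i.e. there is `f : A → S` with the induced homomorphism `A⁺ → S` surjective) for
which the two-tape word problem is a rational relation. -/
def HasRationalWordProblem (S : Type) [Semigroup S] : Prop :=
  ∃ (A : Type) (_ : Fintype A) (f : A → S),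
    Function.Surjective ⇑(FreeSemigroup.lift f) ∧ IsRationalRel (wordProblem f)

/-- The free commutative semigroup on two generators, modelled as
`(ℕ × ℕ) \\ {(0,0)}` under componentwise addition. -/
def FreeComm2 : Type := {p : ℕ × ℕ // p ≠ (0, 0)}

instance : Mul FreeComm2 :=
  ⟨fun x y => ⟨(x.1.1 + y.1.1, x.1.2 + y.1.2), by
    obtain ⟨⟨a, b⟩, h⟩ := x
    obtain ⟨⟨c, d⟩, h'⟩ := y
    simp [Prod.ext_iff] at h h' ⊢
    omega⟩⟩

instance : Semigroup FreeComm2 where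
  mul_assoc x y z := by
    apply Subtype.ext
    show ((x.1.1 + y.1.1) + z.1.1, (x.1.2 + y.1.2) + z.1.2)
        = (x.1.1 + (y.1.1 + z.1.1), x.1.2 + (y.1.2 + z.1.2))
    simp only [Prod.mk.injEq]
    omega

namespace FreeComm2Aux

variable {A : Type}

/-- Projection onto the first tape, at the level of lists. -/
def proj1 (l : List (A ⊕ A)) : List A := l.filterMap (Sum.elim some fun _ => none)

/-- Projection onto the second tape, at the level of lists. -/
def proj2 (l : List (A ⊕ A)) : List A := l.filterMap (Sum.elim (fun _ => none) some)

lemma proj1_append (l₁ l₂ : List (A ⊕ A)) : proj1 (l₁ ++ l₂) = proj1 l₁ ++ proj1 l₂ :=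
  List.filterMap_append ..

lemma proj2_append (l₁ l₂ : List (A ⊕ A)) : proj2 (l₁ ++ l₂) = proj2 l₁ ++ proj2 l₂ :=
  List.filterMap_append ..

lemma length_proj (l : List (A ⊕ A)) : (proj1 l).length + (proj2 l).length = l.length := by
  induction l with
  | nil => rfl
  | cons c t ih =>
    cases c <;> simp [proj1, proj2, List.filterMap_cons] at ih ⊢ <;> omega

lemma twoTapeHom_apply (l : List (A ⊕ A)) :
    twoTapeHom A (FreeMonoid.ofList l)
      = (FreeMonoid.ofList (proj1 l), FreeMonoid.ofList (proj2 l)) := by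
  induction l with
  | nil => exact map_one _
  | cons c t ih =>
    have h : FreeMonoid.ofList (c :: t) = FreeMonoid.of c * FreeMonoid.ofList t := rfl
    rw [h, map_mul, ih]
    cases c <;> simp [twoTapeHom, proj1, proj2, List.filterMap_cons]

lemma toWord_ne_nil (s : FreeSemigroup A) : (freeSemigroupToWord s).toList ≠ [] := by
  induction s using FreeSemigroup.recOnMul with
  | ih1 a => simp [freeSemigroupToWord]
  | ih2 x y hx hy =>
    intro h
    rw [map_mul] at h
    exact hx (List.append_eq_nil_iff.mp h).1

lemma val_mul (x y : FreeComm2) : (x * y).val = x.val + y.val := rfl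

lemma lift_val (f : A → FreeComm2) (s : FreeSemigroup A) :
    (FreeSemigroup.lift f s).val
      = ((freeSemigroupToWord s).toList.map fun c => (f c).val).sum := by
  induction s using FreeSemigroup.recOnMul with
  | ih1 a => simp [freeSemigroupToWord]
  | ih2 x y hx hy =>
    rw [map_mul, map_mul, val_mul, hx, hy]
    show _ = ((FreeMonoid.toList _ ++ FreeMonoid.toList _).map _).sum
    rw [List.map_append, List.sum_append]

lemma coordsum (l : List (ℕ × ℕ)) :
    l.sum.1 + l.sum.2 = (l.map fun p => p.1 + p.2).sum := by
  induction l with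
  | nil => rfl
  | cons p t ih =>
    rw [List.sum_cons, List.map_cons, List.sum_cons, Prod.fst_add, Prod.snd_add]
    omega

lemma one_le_coordsum (p : ℕ × ℕ) (h : p ≠ (0, 0)) : 1 ≤ p.1 + p.2 := by
  rcases p with ⟨x, y⟩
  simp [Prod.ext_iff] at h
  omega

/-- A nonempty word whose value has coordinate sum 1 is a single letter. -/
lemma exists_letter (f : A → FreeComm2) (l : List A) (hne : l ≠ [])
    (v : ℕ × ℕ) (hv : v.1 + v.2 = 1) (hsum : (l.map fun c => (f c).val).sum = v) :
    ∃ a, (f a).val = v := by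
  match l with
  | [] => exact absurd rfl hne
  | [a] => exact ⟨a, by simpa using hsum⟩
  | a :: b :: t =>
    exfalso
    have h := coordsum ((a :: b :: t).map fun c => (f c).val)
    rw [hsum, List.map_map] at h
    simp only [List.map_cons, List.sum_cons, Function.comp] at h
    have h1 := one_le_coordsum _ (f a).2
    have h2 := one_le_coordsum _ (f b).2
    omega

/-- Sum of values for a word over the two distinguished letters. -/
lemma sum_count [DecidableEq A] (f : A → FreeComm2) (a b : A)
    (ha : (f a).val = (1, 0)) (hb : (f b).val = (0, 1)) (hab : a ≠ b)
    (l : List A) (hl : ∀ c ∈ l, c = a ∨ c = b) :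
    (l.map fun c => (f c).val).sum = (l.count a, l.count b) := by
  induction l with
  | nil => simp [Prod.ext_iff]
  | cons c t ih =>
    have hc := hl c (List.mem_cons_self ..)
    have ih' := ih fun x hx => hl x (List.mem_cons_of_mem _ hx)
    rcases hc with rfl | rfl
    · simp [List.count_cons, ih', ha, Prod.ext_iff, hab.symm]
      exact ⟨by omega, hab⟩
    · simp [List.count_cons, ih', hb, Prod.ext_iff, hab]
      exact ⟨hab.symm, by omega⟩

/-- Every nonempty list is the word of a free-semigroup element. -/
lemma exists_preword (l : List A) (h : l ≠ []) :
    ∃ s : FreeSemigroup A, (freeSemigroupToWord s).toList = l := by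
  induction l with
  | nil => exact absurd rfl h
  | cons a t ih =>
    rcases eq_or_ne t [] with rfl | ht
    · exact ⟨FreeSemigroup.of a, by simp [freeSemigroupToWord]⟩
    · obtain ⟨s, hs⟩ := ih ht
      refine ⟨FreeSemigroup.of a * s, ?_⟩
      rw [map_mul]
      show FreeMonoid.toList (_ * _) = _
      rw [FreeMonoid.toList_mul, hs]
      simp [freeSemigroupToWord]

end FreeComm2Aux

open FreeComm2Aux in
/-- The free commutative semigroup on two generators does not have rational word
problem. -/
theorem freeComm2_not_hasRationalWordProblem : ¬ HasRationalWordProblem FreeComm2 := by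
  rintro ⟨A, _, f, hsurj, L, ⟨σ, _, M, hM⟩, himg⟩
  letI : DecidableEq A := Classical.decEq A
  -- extract generators mapping to (1,0) and (0,1)
  obtain ⟨s₁, hs₁⟩ := hsurj ⟨(1, 0), by simp⟩
  obtain ⟨s₂, hs₂⟩ := hsurj ⟨(0, 1), by simp⟩
  obtain ⟨a, ha⟩ := exists_letter f _ (toWord_ne_nil s₁) (1, 0) rfl
    (by rw [← lift_val, hs₁])
  obtain ⟨b, hb⟩ := exists_letter f _ (toWord_ne_nil s₂) (0, 1) rfl
    (by rw [← lift_val, hs₂])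
  have hab : a ≠ b := by
    intro h
    rw [h, hb] at ha
    simp at ha
  set N := Fintype.card σ with hN
  set m := N + 1 with hm
  set u := List.replicate m a ++ List.replicate m b with hu
  set v := List.replicate m b ++ List.replicate m a with hv
  have hmem_u : ∀ c ∈ u, c = a ∨ c = b := by
    intro c hc
    rcases List.mem_append.mp hc with h | h
    · exact Or.inl (List.eq_of_mem_replicate h)
    · exact Or.inr (List.eq_of_mem_replicate h)
  have hmem_v : ∀ c ∈ v, c = a ∨ c = b := by
    intro c hc
    rcases List.mem_append.mp hc with h | h
    · exact Or.inr (List.eq_of_mem_replicate h)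
    · exact Or.inl (List.eq_of_mem_replicate h)
  have hcount_ua : u.count a = m := by
    simp [hu, List.count_replicate, hab, hab.symm]
  have hcount_ub : u.count b = m := by
    simp [hu, List.count_replicate, hab, hab.symm]
  have hcount_va : v.count a = m := by
    simp [hv, List.count_replicate, hab, hab.symm]
  have hcount_vb : v.count b = m := by
    simp [hv, List.count_replicate, hab, hab.symm]
  have hu_ne : u ≠ [] := by simp [hu, hm]
  have hv_ne : v ≠ [] := by simp [hv, hm]
  obtain ⟨su, hsu⟩ := exists_preword u hu_ne
  obtain ⟨sv, hsv⟩ := exists_preword v hv_ne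
  -- the pair (u, v) is in the word problem
  have hpair : (FreeMonoid.ofList u, FreeMonoid.ofList v) ∈ wordProblem f := by
    refine ⟨su, sv, ?_, ?_⟩
    · apply Subtype.ext
      rw [lift_val, lift_val, hsu, hsv, sum_count f a b ha hb hab u hmem_u,
        sum_count f a b ha hb hab v hmem_v, hcount_ua, hcount_ub, hcount_va, hcount_vb]
    · rw [← hsu, ← hsv]
      rfl
  rw [← himg] at hpair
  obtain ⟨w, hwL, hww⟩ := hpair
  have hw_eq : w = FreeMonoid.ofList w.toList := rfl
  rw [hw_eq, twoTapeHom_apply] at hww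
  have hproj1 : proj1 w.toList = u := congrArg FreeMonoid.toList (congrArg Prod.fst hww)
  have hproj2 : proj2 w.toList = v := congrArg FreeMonoid.toList (congrArg Prod.snd hww)
  -- pumping
  have hwacc : w.toList ∈ M.accepts := by rw [hM]; exact hwL
  have hlen : N ≤ w.toList.length := by
    have := length_proj w.toList
    rw [hproj1, hproj2] at this
    simp [hu, hv] at this
    omega
  obtain ⟨x, y, z, hxyz, hlenxy, hyne, hsub⟩ := M.pumping_lemma hwacc hlen
  -- the pumped word
  have hw'acc : x ++ (y ++ y) ++ z ∈ M.accepts := by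
    apply hsub
    refine ⟨x ++ (y ++ y), ⟨x, rfl, y ++ y, ?_, rfl⟩, z, rfl, rfl⟩
    have : y ++ y = ([y, y] : List (List (A ⊕ A))).flatten := by simp
    rw [this]
    exact Language.join_mem_kstar (by intro q hq; simp at hq; exact hq ▸ rfl)
  -- decompose projections
  rw [hxyz] at hproj1 hproj2
  rw [proj1_append, proj1_append] at hproj1
  rw [proj2_append, proj2_append] at hproj2
  -- letters of proj1 y are all a
  have hlen1x : (proj1 x).length ≤ x.length := by have := length_proj x; omega
  have hlen1y : (proj1 y).length ≤ y.length := by have := length_proj y; omega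
  have hlen2x : (proj2 x).length ≤ x.length := by have := length_proj x; omega
  have hlen2y : (proj2 y).length ≤ y.length := by have := length_proj y; omega
  have hy1 : ∀ c ∈ proj1 y, c = a := by
    intro c hc
    have hmem : c ∈ proj1 x ++ proj1 y := List.mem_append_right _ hc
    have htake : proj1 x ++ proj1 y = u.take ((proj1 x ++ proj1 y).length) := by
      conv_rhs => rw [← hproj1]
      exact List.take_left.symm
    have hlen' : (proj1 x ++ proj1 y).length ≤ m := by
      simp only [List.length_append]
      omega
    rw [htake] at hmem
    rw [hu, List.take_append_of_le_length (by simp; omega), List.take_replicate] at hmem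
    exact List.eq_of_mem_replicate hmem
  have hy2 : ∀ c ∈ proj2 y, c = b := by
    intro c hc
    have hmem : c ∈ proj2 x ++ proj2 y := List.mem_append_right _ hc
    have htake : proj2 x ++ proj2 y = v.take ((proj2 x ++ proj2 y).length) := by
      conv_rhs => rw [← hproj2]
      exact List.take_left.symm
    have hlen' : (proj2 x ++ proj2 y).length ≤ m := by
      simp only [List.length_append]
      omega
    rw [htake] at hmem
    rw [hv, List.take_append_of_le_length (by simp; omega), List.take_replicate] at hmem
    exact List.eq_of_mem_replicate hmem
  -- the pumped word is in the word problem
  set w' : List (A ⊕ A) := x ++ (y ++ y) ++ z with hw'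
  have hw'mem : twoTapeHom A (FreeMonoid.ofList w') ∈ wordProblem f := by
    rw [← himg]
    refine Set.mem_image_of_mem _ ?_
    show FreeMonoid.toList (FreeMonoid.ofList w') ∈ L
    rw [← hM]
    exact hw'acc
  rw [twoTapeHom_apply] at hw'mem
  obtain ⟨t₁, t₂, heq, hpq⟩ := hw'mem
  have ht₁ : (freeSemigroupToWord t₁).toList = proj1 w' :=
    congrArg FreeMonoid.toList (congrArg Prod.fst hpq).symm
  have ht₂ : (freeSemigroupToWord t₂).toList = proj2 w' :=
    congrArg FreeMonoid.toList (congrArg Prod.snd hpq).symm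
  have hw'1 : proj1 w' = proj1 x ++ (proj1 y ++ proj1 y) ++ proj1 z := by
    rw [hw', proj1_append, proj1_append, proj1_append]
  have hw'2 : proj2 w' = proj2 x ++ (proj2 y ++ proj2 y) ++ proj2 z := by
    rw [hw', proj2_append, proj2_append, proj2_append]
  -- all letters of proj1 w' are a or b
  have hmem1 : ∀ c ∈ proj1 w', c = a ∨ c = b := by
    intro c hc
    rw [hw'1] at hc
    rcases List.mem_append.mp hc with hc | hc
    · rcases List.mem_append.mp hc with hc | hc
      · exact hmem_u c (hproj1 ▸ List.mem_append_left _ (List.mem_append_left _ hc))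
      · exact Or.inl (hy1 c ((List.mem_append.mp hc).elim id id))
    · exact hmem_u c (hproj1 ▸ List.mem_append_right _ hc)
  have hmem2 : ∀ c ∈ proj2 w', c = a ∨ c = b := by
    intro c hc
    rw [hw'2] at hc
    rcases List.mem_append.mp hc with hc | hc
    · rcases List.mem_append.mp hc with hc | hc
      · exact hmem_v c (hproj2 ▸ List.mem_append_left _ (List.mem_append_left _ hc))
      · exact Or.inr (hy2 c ((List.mem_append.mp hc).elim id id))
    · exact hmem_v c (hproj2 ▸ List.mem_append_right _ hc)
  -- counts
  have hcy1a : (proj1 y).count a = (proj1 y).length := by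
    rw [List.count_eq_length]
    intro c hc
    exact (hy1 c hc).symm
  have hcy1b : (proj1 y).count b = 0 := by
    rw [List.count_eq_zero]
    intro hc
    exact hab (hy1 b hc).symm
  have hcy2a : (proj2 y).count a = 0 := by
    rw [List.count_eq_zero]
    intro hc
    exact hab (hy2 a hc)
  have hcy2b : (proj2 y).count b = (proj2 y).length := by
    rw [List.count_eq_length]
    intro c hc
    exact (hy2 c hc).symm
  have hc1a : (proj1 w').count a = m + (proj1 y).length := by
    have hcu : (proj1 x).count a + (proj1 y).count a + (proj1 z).count a = m := by
      have : u.count a = m := hcount_ua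
      rw [← hproj1] at this
      simp [List.count_append] at this
      omega
    rw [hw'1]
    simp [List.count_append, hcy1a] at *
    omega
  have hc1b : (proj1 w').count b = m := by
    have hcu : (proj1 x).count b + (proj1 y).count b + (proj1 z).count b = m := by
      have : u.count b = m := hcount_ub
      rw [← hproj1] at this
      simp [List.count_append] at this
      omega
    rw [hw'1]
    simp [List.count_append, hcy1b] at *
    omega
  have hc2a : (proj2 w').count a = m := by
    have hcv : (proj2 x).count a + (proj2 y).count a + (proj2 z).count a = m := by
      have : v.count a = m := hcount_va
      rw [← hproj2] at this
      simp [List.count_append] at this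
      omega
    rw [hw'2]
    simp [List.count_append, hcy2a] at *
    omega
  have hc2b : (proj2 w').count b = m + (proj2 y).length := by
    have hcv : (proj2 x).count b + (proj2 y).count b + (proj2 z).count b = m := by
      have : v.count b = m := hcount_vb
      rw [← hproj2] at this
      simp [List.count_append] at this
      omega
    rw [hw'2]
    simp [List.count_append, hcy2b] at *
    omega
  -- conclude
  have hvals : ((m : ℕ) + (proj1 y).length, (m : ℕ))
      = ((m : ℕ), (m : ℕ) + (proj2 y).length) := by
    have h1 : (FreeSemigroup.lift f t₁).val = (m + (proj1 y).length, m) := by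
      rw [lift_val, ht₁, sum_count f a b ha hb hab _ hmem1, hc1a, hc1b]
    have h2 : (FreeSemigroup.lift f t₂).val = (m, m + (proj2 y).length) := by
      rw [lift_val, ht₂, sum_count f a b ha hb hab _ hmem2, hc2a, hc2b]
    rw [← h1, ← h2, heq]
  have hy_len : y.length = 0 := by
    have hlp := length_proj y
    rw [Prod.mk.injEq] at hvals
    obtain ⟨h1, h2⟩ := hvals
    omega
  exact hyne (List.length_eq_zero_iff.mp hy_len)
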